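/- For every tree T on n ≥ 3 vertices, the forest obtained by deleting from T the edges of a suitably chosen maximum matching has maximum degree strictly less than Δ(T). -/

import Mathlib

open SimpleGraph

/-- A walk is properly colored: no two consecutive edges share a color. -/
def ProperWalk {V : Type*} {G : SimpleGraph V} (c : Sym2 V → ℕ) {u v : V} (p : G.Walk u v) : Prop :=
  (p.edges.map c).Chain' (· ≠ ·)

/-- An edge-colored graph is properly connected. -/
def ProperlyConnected {V : Type*} (G : SimpleGraph V) (c : Sym2 V → ℕ) : Prop :=
  ∀ u v : V, u ≠ v → ∃ p : G.Walk u v, p.IsPath ∧ ProperWalk c p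

/-- Number of edges recolored away from the base color 0. -/
noncomputable def numRecolored {V : Type*} (G : SimpleGraph V) (c : Sym2 V → ℕ) : ℕ :=
  {e | e ∈ G.edgeSet ∧ c e ≠ 0}.ncard

/-- Number of new colors used. -/
noncomputable def numNewColors {V : Type*} (G : SimpleGraph V) (c : Sym2 V → ℕ) : ℕ :=
  (c '' {e | e ∈ G.edgeSet ∧ c e ≠ 0}).ncard

/-- Optimal proper connection number: minimum of p + q. -/
noncomputable def pcOpt {V : Type*} (G : SimpleGraph V) : ℕ :=
  sInf { n | ∃ c : Sym2 V → ℕ, ProperlyConnected G c ∧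
    n = numRecolored G c + numNewColors G c }

/-- Maximum matching size. -/
noncomputable def matchingNum {V : Type*} (G : SimpleGraph V) : ℕ :=
  sSup { n | ∃ M : SimpleGraph.Subgraph G, M.IsMatching ∧ n = M.edgeSet.ncard }

/-- Maximum degree. -/
noncomputable def maxDeg {V : Type*} (G : SimpleGraph V) : ℕ :=
  sSup { d | ∃ v : V, d = (G.neighborSet v).ncard }

section Aux0

-- helper: concat of path is a path
lemma isPath_concat' {V : Type*} {G : SimpleGraph V} {u v w : V} {p : G.Walk u v}
    (hp : p.IsPath) (h : G.Adj v w) (hw : w ∉ p.support) : (p.concat h).IsPath := by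
  rw [Walk.isPath_def, Walk.support_concat, List.nodup_append']
  refine ⟨hp.support_nodup, List.nodup_singleton w, ?_⟩
  intro a ha hb
  rw [List.mem_singleton] at hb
  exact hw (hb ▸ ha)

-- key tree distance lemma
lemma treeDistAdj' {V : Type*} [Fintype V] [DecidableEq V] {T : SimpleGraph V} (hT : T.IsTree) {v w x f : V}
    (hwx : T.Adj w x) (hwf : T.Adj w f) (hxf : x ≠ f)
    (hd : T.dist v w = T.dist v f + 1) : T.dist v x = T.dist v w + 1 := by
  have hconn := hT.isConnected
  have hle : T.dist v x ≤ T.dist v w + 1 := by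
    have := hconn.dist_triangle (u := v) (v := w) (w := x)
    rwa [(dist_eq_one_iff_adj).mpr hwx] at this
  have hge : T.dist v w + 1 ≤ T.dist v x := by
    by_contra hcon
    push_neg at hcon
    have hxle : T.dist v x ≤ T.dist v w := by omega
    obtain ⟨q, hq, hql⟩ := hconn.exists_path_of_dist v f
    have hwq : w ∉ q.support := by
      intro h
      have h1 : T.dist v w ≤ (q.takeUntil w h).length := dist_le _
      have h2 : (q.takeUntil w h).length ≤ q.length := Walk.length_takeUntil_le _ _
      omega
    obtain ⟨r, hr, hrl⟩ := hconn.exists_path_of_dist v x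
    have hwr : w ∉ r.support := by
      intro h
      have h1 : T.dist v w ≤ (r.takeUntil w h).length := dist_le _
      have h2 : (r.takeUntil w h).length ≤ r.length := Walk.length_takeUntil_le _ _
      have h3 : (r.takeUntil w h).length = r.length := by omega
      have h4 := r.take_spec h
      have h5 : r.length = (r.takeUntil w h).length + (r.dropUntil w h).length := by
        conv_lhs => rw [← h4]
        exact (Walk.length_append _ _)
      have h6 : (r.dropUntil w h).length = 0 := by omega
      exact hwx.ne (Walk.eq_of_length_eq_zero h6)
    have hppath : (q.concat hwf.symm).IsPath := isPath_concat' hq hwf.symm hwq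
    have hrpath : (r.concat hwx.symm).IsPath := isPath_concat' hr hwx.symm hwr
    obtain ⟨P, _, hPu⟩ := hT.existsUnique_path v w
    have heq : r.concat hwx.symm = q.concat hwf.symm := by
      rw [hPu _ hrpath, hPu _ hppath]
    have hmem : s(x, w) ∈ (r.concat hwx.symm).edges := by
      rw [Walk.edges_concat]
      simp [Sym2.eq_swap]
    rw [heq, Walk.edges_concat] at hmem
    rw [List.concat_eq_append] at hmem
    rcases List.mem_append.mp hmem with hin | hin
    · exact hwq (Walk.snd_mem_support_of_mem_edges q hin)
    · simp only [List.mem_singleton, Sym2.eq_iff] at hin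
      rcases hin with ⟨h1, _⟩ | ⟨h1, h2⟩
      · exact hxf h1
      · exact hwx.ne h1.symm
  omega

end Aux0

section Matchings
variable {V : Type*} [Fintype V] {T : SimpleGraph V}

lemma bddM' : BddAbove { n | ∃ M : SimpleGraph.Subgraph T, M.IsMatching ∧ n = M.edgeSet.ncard } := by
  refine ⟨(Set.univ : Set (Sym2 V)).ncard, ?_⟩
  rintro n ⟨M, _, rfl⟩
  exact Set.ncard_le_ncard (Set.subset_univ _) (Set.toFinite _)

lemma matchingNum_spec' : ∃ M : Subgraph T, M.IsMatching ∧ M.edgeSet.ncard = matchingNum T := by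
  have hne : { n | ∃ M : SimpleGraph.Subgraph T, M.IsMatching ∧ n = M.edgeSet.ncard }.Nonempty :=
    ⟨0, ⊥, fun v hv => by simp [Subgraph.verts_bot] at hv, by simp⟩
  obtain ⟨M, hM, h⟩ := Nat.sSup_mem hne bddM'
  exact ⟨M, hM, h.symm⟩

lemma le_matchingNum' {M : Subgraph T} (hM : M.IsMatching) : M.edgeSet.ncard ≤ matchingNum T :=
  le_csSup bddM' ⟨M, hM, rfl⟩

/-- no augmenting edge between two exposed vertices -/
lemma aug' {M : Subgraph T} (hM : M.IsMatching) (hc : M.edgeSet.ncard = matchingNum T)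
    {a b : V} (ha : a ∉ M.verts) (hb : b ∉ M.verts) (hab : T.Adj a b) : False := by
  set N : Subgraph T := M ⊔ T.subgraphOfAdj hab with hN
  have hdisj : Disjoint M.support (T.subgraphOfAdj hab).support := by
    rw [Set.disjoint_left]
    intro z hz hz2
    have h1 : z ∈ M.verts := M.support_subset_verts hz
    have h2 : z ∈ ({a, b} : Set V) := (T.subgraphOfAdj hab).support_subset_verts hz2
    rcases h2 with rfl | rfl
    · exact ha h1
    · exact hb h1
  have hNm : N.IsMatching := Subgraph.IsMatching.sup hM (Subgraph.IsMatching.subgraphOfAdj hab) hdisj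
  have hnotmem : s(a, b) ∉ M.edgeSet := by
    intro h
    exact ha (M.edge_vert (Subgraph.mem_edgeSet.mp h))
  have hedge : N.edgeSet = insert s(a,b) M.edgeSet := by
    rw [hN, SimpleGraph.Subgraph.edgeSet_sup, SimpleGraph.edgeSet_subgraphOfAdj]
    rw [Set.union_singleton]
  have hcard : N.edgeSet.ncard = M.edgeSet.ncard + 1 := by
    rw [hedge, Set.ncard_insert_of_notMem hnotmem (Set.toFinite _)]
  have := le_matchingNum' hNm
  omega

/-- the swap step: replace matched edge (x,y) by the edge (w,x), exposing y, covering w. -/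
lemma swapStep' {M' : Subgraph T} (hM' : M'.IsMatching)
    {w x y : V} (hw : w ∉ M'.verts) (hwx : T.Adj w x) (hxy : M'.Adj x y) :
    ∃ N : Subgraph T, N.IsMatching ∧ N.verts = (M'.verts \ {y}) ∪ {w} ∧
      N.edgeSet.ncard = M'.edgeSet.ncard := by
  have hxv : x ∈ M'.verts := M'.edge_vert hxy
  have hyv : y ∈ M'.verts := M'.edge_vert hxy.symm
  have hxyT : T.Adj x y := M'.adj_sub hxy
  have hxyne : x ≠ y := hxyT.ne
  have hwxne : w ≠ x := hwx.ne
  have hwyne : w ≠ y := fun h => hw (h ▸ hyv)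
  have hux : ∀ z, M'.Adj x z → z = y := fun z h => (hM' hxv).unique h hxy
  have huy : ∀ z, M'.Adj y z → z = x := fun z h => (hM' hyv).unique h hxy.symm
  set D : Subgraph T := M'.deleteVerts {x, y} with hD
  have hDm : D.IsMatching := by
    rintro z hz
    rw [hD, Subgraph.deleteVerts_verts] at hz
    obtain ⟨p, hp, hpu⟩ := hM' hz.1
    have hpxy : p ∉ ({x, y} : Set V) := by
      rintro (rfl | rfl)
      · have : z = y := hux z hp.symm
        exact hz.2 (by simp [this])
      · have : z = x := huy z hp.symm
        exact hz.2 (by simp [this])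
    refine ⟨p, ?_, ?_⟩
    · show (M'.deleteVerts {x, y}).Adj z p
      rw [Subgraph.deleteVerts_adj]
      exact ⟨hz.1, hz.2, M'.edge_vert hp.symm, hpxy, hp⟩
    · intro q hq
      replace hq : (M'.deleteVerts {x, y}).Adj z q := hq
      rw [Subgraph.deleteVerts_adj] at hq
      exact hpu q hq.2.2.2.2
  have hdisj : Disjoint D.support (T.subgraphOfAdj hwx).support := by
    rw [Set.disjoint_left]
    intro z hz hz2
    have h1 : z ∈ M'.verts \ {x, y} := by
      have := D.support_subset_verts hz
      rwa [hD, Subgraph.deleteVerts_verts] at this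
    have h2 : z ∈ ({w, x} : Set V) := (T.subgraphOfAdj hwx).support_subset_verts hz2
    rcases h2 with rfl | rfl
    · exact hw h1.1
    · exact h1.2 (by simp)
  refine ⟨D ⊔ T.subgraphOfAdj hwx,
    Subgraph.IsMatching.sup hDm (Subgraph.IsMatching.subgraphOfAdj hwx) hdisj, ?_, ?_⟩
  · rw [Subgraph.verts_sup, hD, Subgraph.deleteVerts_verts, subgraphOfAdj_verts]
    ext z
    simp only [Set.mem_union, Set.mem_diff, Set.mem_insert_iff, Set.mem_singleton_iff]
    constructor
    · rintro (⟨hz, hz2⟩ | (rfl | rfl))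
      · exact Or.inl ⟨hz, fun h => hz2 (Or.inr h)⟩
      · exact Or.inr rfl
      · exact Or.inl ⟨hxv, hxyne⟩
    · rintro (⟨hz, hz2⟩ | rfl)
      · by_cases hzx : z = x
        · exact Or.inr (Or.inr hzx)
        · exact Or.inl ⟨hz, by tauto⟩
      · exact Or.inr (Or.inl rfl)
  · have hDedge : D.edgeSet = M'.edgeSet \ {s(x, y)} := by
      ext e
      induction e using Sym2.ind with
      | _ a b =>
        simp only [Subgraph.mem_edgeSet, Set.mem_diff, Set.mem_singleton_iff]
        constructor
        · intro h
          rw [hD, Subgraph.deleteVerts_adj] at h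
          refine ⟨h.2.2.2.2, ?_⟩
          intro hcon
          rw [Sym2.eq_iff] at hcon
          rcases hcon with ⟨rfl, rfl⟩ | ⟨rfl, rfl⟩
          · exact h.2.1 (by simp)
          · exact h.2.1 (by simp)
        · rintro ⟨h, hne⟩
          rw [hD, Subgraph.deleteVerts_adj]
          refine ⟨M'.edge_vert h, ?_, M'.edge_vert h.symm, ?_, h⟩
          · rintro (rfl | rfl)
            · exact hne (by rw [Sym2.eq_iff]; exact Or.inl ⟨rfl, hux b h⟩)
            · exact hne (by rw [Sym2.eq_iff]; exact Or.inr ⟨rfl, huy b h⟩)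
          · rintro (rfl | rfl)
            · exact hne (by rw [Sym2.eq_iff]; exact Or.inr ⟨hux a h.symm, rfl⟩)
            · exact hne (by rw [Sym2.eq_iff]; exact Or.inl ⟨huy a h.symm, rfl⟩)
    have hxyE : s(x, y) ∈ M'.edgeSet := Subgraph.mem_edgeSet.mpr hxy
    have hwxE : s(w, x) ∉ M'.edgeSet \ {s(x, y)} := by
      rintro ⟨h, -⟩
      exact hw (M'.edge_vert (Subgraph.mem_edgeSet.mp h))
    have hpos : 0 < M'.edgeSet.ncard :=
      (Set.ncard_pos (Set.toFinite _)).mpr ⟨_, hxyE⟩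
    rw [SimpleGraph.Subgraph.edgeSet_sup, SimpleGraph.edgeSet_subgraphOfAdj, hDedge, Set.union_singleton,
      Set.ncard_insert_of_notMem hwxE (Set.toFinite _),
      Set.ncard_diff_singleton_of_mem hxyE]
    omega

end Matchings


section Aux
variable {V : Type*} [Fintype V] {T : SimpleGraph V}

lemma chain [DecidableEq V] (hT : T.IsTree) {M : Subgraph T} (v : V)
    (hΔ2 : 2 ≤ maxDeg T)
    (hdegle : ∀ z : V, (T.neighborSet z).ncard ≤ maxDeg T) :
    ∀ (k : ℕ) (M' : Subgraph T) (w : V), M'.IsMatching →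
      M'.edgeSet.ncard = matchingNum T → w ∉ M'.verts → w ≠ v →
      M'.verts ∪ {w} = M.verts ∪ {v} →
      (∃ f, T.Adj w f ∧ T.dist v w = T.dist v f + 1) →
      Fintype.card V - T.dist v w = k →
      ∃ (N : Subgraph T) (y : V), N.IsMatching ∧ N.edgeSet.ncard = matchingNum T ∧
        y ∉ N.verts ∧ y ≠ v ∧ N.verts ∪ {y} = M.verts ∪ {v} ∧
        (T.neighborSet y).ncard < maxDeg T := by
  intro k
  induction k using Nat.strong_induction_on with
  | _ k ih =>
  intro M' w hM' hc hw hwv hverts hf hk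
  by_cases hdegw : (T.neighborSet w).ncard < maxDeg T
  · exact ⟨M', w, hM', hc, hw, hwv, hverts, hdegw⟩
  obtain ⟨f, hwf, hdistf⟩ := hf
  have hdegw' : (T.neighborSet w).ncard = maxDeg T := le_antisymm (hdegle w) (not_lt.mp hdegw)
  have h2 : 1 < (T.neighborSet w).ncard := by omega
  obtain ⟨x, hx, hxf⟩ := Set.exists_ne_of_one_lt_ncard h2 f
  have hwx : T.Adj w x := hx
  have hdx : T.dist v x = T.dist v w + 1 := treeDistAdj' hT hwx hwf hxf hdistf
  have hxmem : x ∈ M'.verts := by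
    by_contra hxm
    exact aug' hM' hc hw hxm hwx
  obtain ⟨y, hxy, -⟩ := hM' hxmem
  have hxyT : T.Adj x y := M'.adj_sub hxy
  have hyw : y ≠ w := fun h => hw (h ▸ M'.edge_vert hxy.symm)
  have hdy : T.dist v y = T.dist v x + 1 := treeDistAdj' hT hxyT hwx.symm hyw hdx
  have hwv0 : T.dist v w ≠ 0 := by
    rw [dist_ne_zero_iff_ne_and_reachable]
    exact ⟨Ne.symm hwv, hT.isConnected.preconnected v w⟩
  have hyv : y ≠ v := by
    intro h; subst h
    have h1 : T.dist y x = 1 := dist_eq_one_iff_adj.mpr hxyT.symm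
    omega
  obtain ⟨N, hNm, hNverts, hNcard⟩ := swapStep' hM' hw hwx hxy
  have hymem : y ∈ M'.verts := M'.edge_vert hxy.symm
  have hyN : y ∉ N.verts := by
    rw [hNverts]
    rintro (⟨-, h⟩ | h)
    · exact h rfl
    · exact hyw (by simpa using h)
  have hNverts' : N.verts ∪ {y} = M.verts ∪ {v} := by
    rw [hNverts, ← hverts]
    ext z
    simp only [Set.mem_union, Set.mem_diff, Set.mem_singleton_iff]
    constructor
    · rintro ((⟨hz, -⟩ | rfl) | rfl)
      · exact Or.inl hz
      · exact Or.inr rfl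
      · exact Or.inl hymem
    · rintro (hz | rfl)
      · by_cases hzy : z = y
        · exact Or.inr hzy
        · exact Or.inl (Or.inl ⟨hz, hzy⟩)
      · exact Or.inl (Or.inr rfl)
  have hd0 : T.dist v y ≠ 0 := by omega
  obtain ⟨p, hp⟩ := exists_walk_of_dist_ne_zero hd0
  have hlt := (p.isPath_of_length_eq_dist hp).length_lt
  exact ih (Fintype.card V - T.dist v y) (by omega) N y hNm (hNcard.trans hc) hyN hyv hNverts'
    ⟨x, hxyT.symm, by omega⟩ rfl

end Aux

section Main
variable {V : Type*} [Fintype V] {T : SimpleGraph V}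

lemma exposed_lt [DecidableEq V] (hT : T.IsTree) (hΔ2 : 2 ≤ maxDeg T)
    (hdegle : ∀ z : V, (T.neighborSet z).ncard ≤ maxDeg T) :
    ∃ M : Subgraph T, M.IsMatching ∧ M.edgeSet.ncard = matchingNum T ∧
      ∀ z, z ∉ M.verts → (T.neighborSet z).ncard < maxDeg T := by
  classical
  set SS2 := {m | ∃ N : Subgraph T, N.IsMatching ∧ N.edgeSet.ncard = matchingNum T ∧
    m = {t | t ∉ N.verts ∧ (T.neighborSet t).ncard = maxDeg T}.ncard} with hSS2
  have hne : SS2.Nonempty := by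
    obtain ⟨M, hM, hc⟩ := matchingNum_spec' (T := T)
    exact ⟨_, M, hM, hc, rfl⟩
  obtain ⟨M, hM, hc, hEm⟩ := Nat.sInf_mem hne
  refine ⟨M, hM, hc, ?_⟩
  intro v hv
  by_contra hcon
  have hdeg : (T.neighborSet v).ncard = maxDeg T := le_antisymm (hdegle v) (not_lt.mp hcon)
  have h1 : 0 < (T.neighborSet v).ncard := by omega
  obtain ⟨u, hu⟩ := (Set.ncard_pos (Set.toFinite _)).mp h1
  have hvu : T.Adj v u := hu
  have humem : u ∈ M.verts := by
    by_contra h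
    exact aug' hM hc hv h hvu
  obtain ⟨w0, huw0, -⟩ := hM humem
  have huw0T : T.Adj u w0 := M.adj_sub huw0
  have hw0v : w0 ≠ v := fun h => hv (h ▸ M.edge_vert huw0.symm)
  obtain ⟨N1, hN1m, hN1verts, hN1card⟩ := swapStep' hM hv hvu huw0
  have hw0mem : w0 ∈ M.verts := M.edge_vert huw0.symm
  have hw0N : w0 ∉ N1.verts := by
    rw [hN1verts]
    rintro (⟨-, h⟩ | h)
    · exact h rfl
    · exact hw0v (by simpa using h)
  have hN1verts' : N1.verts ∪ {w0} = M.verts ∪ {v} := by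
    rw [hN1verts]
    ext z
    simp only [Set.mem_union, Set.mem_diff, Set.mem_singleton_iff]
    constructor
    · rintro ((⟨hz, -⟩ | rfl) | rfl)
      · exact Or.inl hz
      · exact Or.inr rfl
      · exact Or.inl hw0mem
    · rintro (hz | rfl)
      · by_cases hzy : z = w0
        · exact Or.inr hzy
        · exact Or.inl (Or.inl ⟨hz, hzy⟩)
      · exact Or.inl (Or.inr rfl)
  have hdu : T.dist v u = 1 := dist_eq_one_iff_adj.mpr hvu
  have hdw0ne : T.dist v w0 ≠ 0 := by
    rw [dist_ne_zero_iff_ne_and_reachable]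
    exact ⟨Ne.symm hw0v, hT.isConnected.preconnected v w0⟩
  have hdw0le : T.dist v w0 ≤ 2 := by
    have := hT.isConnected.dist_triangle (u := v) (v := u) (w := w0)
    have h2 : T.dist u w0 = 1 := dist_eq_one_iff_adj.mpr huw0T
    omega
  have hf : ∃ f, T.Adj w0 f ∧ T.dist v w0 = T.dist v f + 1 := by
    rcases (by omega : T.dist v w0 = 1 ∨ T.dist v w0 = 2) with h | h
    · exact ⟨v, (dist_eq_one_iff_adj.mp h).symm, by rw [h, dist_self]⟩
    · exact ⟨u, huw0T.symm, by rw [h, hdu]⟩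
  obtain ⟨N, y, hNm, hNc, hyN, hyv, hNverts, hylt⟩ :=
    chain hT v hΔ2 hdegle (Fintype.card V - T.dist v w0) N1 w0 hN1m (hN1card.trans hc)
      hw0N hw0v hN1verts' hf rfl
  have hsub : {t | t ∉ N.verts ∧ (T.neighborSet t).ncard = maxDeg T}
      ⊂ {t | t ∉ M.verts ∧ (T.neighborSet t).ncard = maxDeg T} := by
    constructor
    · rintro t ⟨htN, htd⟩
      have hty : t ≠ y := fun h => by rw [h] at htd; omega
      have : t ∉ N.verts ∪ {y} := by
        rintro (h | h)
        · exact htN h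
        · exact hty (by simpa using h)
      rw [hNverts] at this
      exact ⟨fun h => this (Or.inl h), htd⟩
    · intro hsub'
      have hvmem : v ∈ {t | t ∉ M.verts ∧ (T.neighborSet t).ncard = maxDeg T} := ⟨hv, hdeg⟩
      have hvN : v ∈ N.verts := by
        have : v ∈ N.verts ∪ {y} := by rw [hNverts]; exact Or.inr rfl
        rcases this with h | h
        · exact h
        · exact absurd ((show v = y by simpa using h)).symm hyv
      exact (hsub' hvmem).1 hvN
  have hlt : ({t | t ∉ N.verts ∧ (T.neighborSet t).ncard = maxDeg T}).ncard
      < ({t | t ∉ M.verts ∧ (T.neighborSet t).ncard = maxDeg T}).ncard :=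
    Set.ncard_lt_ncard hsub (Set.toFinite _)
  have hmem2 : ({t | t ∉ N.verts ∧ (T.neighborSet t).ncard = maxDeg T}).ncard ∈ SS2 :=
    ⟨N, hNm, hNc, rfl⟩
  have := Nat.sInf_le hmem2
  omega

end Main

theorem stmt14 {V : Type*} [Fintype V] (T : SimpleGraph V) (hT : T.IsTree)
    (hn : 3 ≤ Fintype.card V) :
    ∃ M : SimpleGraph.Subgraph T, M.IsMatching ∧ M.edgeSet.ncard = matchingNum T ∧
      maxDeg (T.deleteEdges M.edgeSet) ≤ maxDeg T - 1 := by
  classical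
  have hbddD : ∀ (G : SimpleGraph V), BddAbove { d | ∃ v : V, d = (G.neighborSet v).ncard } := by
    intro G
    refine ⟨Fintype.card V, ?_⟩
    rintro d ⟨z, rfl⟩
    calc (G.neighborSet z).ncard ≤ (Set.univ : Set V).ncard :=
          Set.ncard_le_ncard (Set.subset_univ _) Set.finite_univ
      _ = Fintype.card V := by rw [Set.ncard_univ, Nat.card_eq_fintype_card]
  have hncard : ∀ z : V, (T.neighborSet z).ncard = T.degree z := by
    intro z
    rw [Set.ncard_eq_toFinset_card', ← neighborFinset_def, degree]
  have hdegle : ∀ z : V, (T.neighborSet z).ncard ≤ maxDeg T := by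
    intro z
    exact le_csSup (hbddD T) ⟨z, rfl⟩
  have hΔ2 : 2 ≤ maxDeg T := by
    by_contra hcon
    push_neg at hcon
    have hall : ∀ z : V, T.degree z ≤ 1 := by
      intro z
      have := hdegle z
      rw [hncard z] at this
      omega
    have hsum : ∑ z : V, T.degree z = 2 * T.edgeFinset.card := T.sum_degrees_eq_twice_card_edges
    have hedge : T.edgeFinset.card + 1 = Fintype.card V := hT.card_edgeFinset
    have hle : ∑ z : V, T.degree z ≤ Fintype.card V := by
      calc ∑ z : V, T.degree z ≤ ∑ _z : V, 1 := Finset.sum_le_sum (fun z _ => hall z)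
        _ = Fintype.card V := by simp
    omega
  obtain ⟨M, hM, hc, hexp⟩ := exposed_lt hT hΔ2 hdegle
  refine ⟨M, hM, hc, ?_⟩
  have hV : Nonempty V := Fintype.card_pos_iff.mp (by omega)
  obtain ⟨v0⟩ := hV
  have hb : ∀ d ∈ { d | ∃ z : V, d = ((T.deleteEdges M.edgeSet).neighborSet z).ncard },
      d ≤ maxDeg T - 1 := by
    rintro d ⟨z, rfl⟩
    by_cases hz : z ∈ M.verts
    · obtain ⟨p, hp, -⟩ := hM hz
      have hpT : T.Adj z p := M.adj_sub hp
      have hsub : (T.deleteEdges M.edgeSet).neighborSet z ⊆ T.neighborSet z \ {p} := by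
        intro t ht
        have ht' : T.Adj z t ∧ s(z, t) ∉ M.edgeSet := by
          simpa [SimpleGraph.deleteEdges_adj] using ht
        refine ⟨ht'.1, ?_⟩
        intro h
        rw [Set.mem_singleton_iff] at h
        exact ht'.2 (h ▸ Subgraph.mem_edgeSet.mpr hp)
      have h1 : ((T.deleteEdges M.edgeSet).neighborSet z).ncard
          ≤ (T.neighborSet z \ {p}).ncard := Set.ncard_le_ncard hsub (Set.toFinite _)
      have h2 : (T.neighborSet z \ {p}).ncard = (T.neighborSet z).ncard - 1 :=
        Set.ncard_diff_singleton_of_mem hpT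
      have h3 := hdegle z
      omega
    · have hsub : (T.deleteEdges M.edgeSet).neighborSet z ⊆ T.neighborSet z := by
        intro t ht
        exact ((SimpleGraph.deleteEdges_adj).mp ht).1
      have h1 : ((T.deleteEdges M.edgeSet).neighborSet z).ncard
          ≤ (T.neighborSet z).ncard := Set.ncard_le_ncard hsub (Set.toFinite _)
      have h2 := hexp z hz
      omega
  exact csSup_le ⟨_, ⟨v0, rfl⟩⟩ hb
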